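/- Let S : EuclideanSpace ℝ (Fin d) → Matrix (Fin d) (Fin d) ℝ be a continuously differentiable matrix field whose value at every point is symmetric and positive semidefinite, with every entry Lebesgue-integrable over EuclideanSpace ℝ (Fin d). Let K be a compact convex subset of EuclideanSpace ℝ (Fin d), and suppose the divergence of S vanishes at every point outside K, i.e., for every x ∉ K and every i, ∑ j, (fderiv ℝ (fun y => S y i j) x) (EuclideanSpace.single j 1) = 0. Then S x = 0 for every x ∉ K. (Smooth version of: the support of an equilibrated positive semidefinite stress is contained in the convex hull of the support of the loading.) -/

import Mathlib

open scoped BigOperators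

set_option linter.unusedSectionVars false

open MeasureTheory intervalIntegral

noncomputable def sbump (t : ℝ) : ℝ := max (1 - t^2) 0

lemma sbump_nonneg (t : ℝ) : 0 ≤ sbump t := le_max_right _ _

lemma sbump_le_one (t : ℝ) : sbump t ≤ 1 :=
  max_le (by nlinarith [sq_nonneg t]) zero_le_one

lemma sbump_continuous : Continuous sbump :=
  (continuous_const.sub (continuous_pow 2)).max continuous_const

lemma sbump_eq_zero {t : ℝ} (h : 1 ≤ |t|) : sbump t = 0 := by
  have : 1 ≤ t^2 := by nlinarith [sq_abs t, abs_nonneg t]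
  simp only [sbump]
  exact max_eq_right (by linarith)

lemma sbump_zero : sbump 0 = 1 := by norm_num [sbump]

lemma sbump_intervalIntegrable (c p q : ℝ) :
    IntervalIntegrable (fun t => sbump (t - c)) volume p q :=
  Continuous.intervalIntegrable (sbump_continuous.comp (continuous_id.sub continuous_const)) _ _

lemma integral_sbump_eq_zero {p q : ℝ} (h : ∀ t ∈ Set.uIcc p q, 1 ≤ |t|) :
    ∫ t in p..q, sbump t = 0 := by
  rw [intervalIntegral.integral_congr (g := fun _ => (0:ℝ)) (fun t ht => sbump_eq_zero (h t ht))]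
  simp

lemma integral_sbump_core : ∫ t in (-1:ℝ)..1, sbump t = 4/3 := by
  have h : Set.EqOn sbump (fun t => 1 - t^2) (Set.uIcc (-1:ℝ) 1) := by
    intro t ht
    rw [Set.uIcc_of_le (by norm_num)] at ht
    have h1 : -1 ≤ t := ht.1
    have h2 : t ≤ 1 := ht.2
    simp only [sbump]
    exact max_eq_left (by nlinarith)
  rw [intervalIntegral.integral_congr h,
    intervalIntegral.integral_sub (intervalIntegrable_const) (Continuous.intervalIntegrable (continuous_pow 2) _ _),
    integral_pow]
  simp
  norm_num

lemma integral_sbump_shift (c a s : ℝ) :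
    ∫ t in a..s, sbump (t - c) = ∫ t in (a - c)..(s - c), sbump t :=
  intervalIntegral.integral_comp_sub_right sbump c

lemma unsh_full {a s : ℝ} (ha : a ≤ -1) (hs : 1 ≤ s) : ∫ t in a..s, sbump t = 4/3 := by
  have i : ∀ u v : ℝ, IntervalIntegrable sbump volume u v := fun u v =>
    Continuous.intervalIntegrable sbump_continuous u v
  have h1 : ∫ t in a..(-1:ℝ), sbump t = 0 := by
    apply integral_sbump_eq_zero
    intro t ht
    rw [Set.uIcc_of_le ha] at ht
    have : t ≤ -1 := ht.2
    rw [abs_of_nonpos (by linarith)]; linarith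
  have h2 : ∫ t in (1:ℝ)..s, sbump t = 0 := by
    apply integral_sbump_eq_zero
    intro t ht
    rw [Set.uIcc_of_le hs] at ht
    rw [abs_of_nonneg (by linarith [ht.1])]; exact ht.1
  have e1 := intervalIntegral.integral_add_adjacent_intervals (i a (-1)) (i (-1) s)
  have e2 := intervalIntegral.integral_add_adjacent_intervals (i (-1) 1) (i 1 s)
  rw [← e1, h1, zero_add, ← e2, h2, add_zero, integral_sbump_core]

lemma unsh_nonneg {a s : ℝ} (ha : a ≤ -1) : 0 ≤ ∫ t in a..s, sbump t := by
  rcases le_total a s with h | h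
  · exact intervalIntegral.integral_nonneg h (fun u _ => sbump_nonneg u)
  · rw [intervalIntegral.integral_symm]
    have : ∫ t in s..a, sbump t = 0 := by
      apply integral_sbump_eq_zero
      intro t ht
      rw [Set.uIcc_of_le h] at ht
      have : t ≤ -1 := le_trans ht.2 ha
      rw [abs_of_nonpos (by linarith)]; linarith
    rw [this]; norm_num

lemma unsh_le {a s : ℝ} (ha : a ≤ -1) : ∫ t in a..s, sbump t ≤ 4/3 := by
  have i : ∀ u v : ℝ, IntervalIntegrable sbump volume u v := fun u v =>
    Continuous.intervalIntegrable sbump_continuous u v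
  have e : ∫ t in a..s, sbump t = (∫ t in a..(1:ℝ), sbump t) + ∫ t in (1:ℝ)..s, sbump t :=
    (intervalIntegral.integral_add_adjacent_intervals (i a 1) (i 1 s)).symm
  rw [e, unsh_full ha le_rfl]
  have : ∫ t in (1:ℝ)..s, sbump t ≤ 0 := by
    rcases le_total 1 s with h | h
    · have : ∫ t in (1:ℝ)..s, sbump t = 0 := by
        apply integral_sbump_eq_zero
        intro t ht
        rw [Set.uIcc_of_le h] at ht
        rw [abs_of_nonneg (by linarith [ht.1])]; exact ht.1
      rw [this]
    · rw [intervalIntegral.integral_symm]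
      have h0 : 0 ≤ ∫ t in s..(1:ℝ), sbump t :=
        intervalIntegral.integral_nonneg h (fun u _ => sbump_nonneg u)
      linarith
  linarith

lemma primitive_nonneg {c a s : ℝ} (ha : a ≤ c - 1) : 0 ≤ ∫ t in a..s, sbump (t - c) := by
  rw [integral_sbump_shift]; exact unsh_nonneg (by linarith)

lemma primitive_le {c a s : ℝ} (ha : a ≤ c - 1) : ∫ t in a..s, sbump (t - c) ≤ 4/3 := by
  rw [integral_sbump_shift]; exact unsh_le (by linarith)

lemma primitive_zero {c a s : ℝ} (ha : a ≤ c - 1) (hs : s ≤ c - 1) :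
    ∫ t in a..s, sbump (t - c) = 0 := by
  rw [integral_sbump_shift]
  apply integral_sbump_eq_zero
  intro t ht
  rcases Set.mem_uIcc.1 ht with h | h
  · have : t ≤ -1 := le_trans h.2 (by linarith)
    rw [abs_of_nonpos (by linarith)]; linarith
  · have : t ≤ -1 := le_trans h.2 (by linarith)
    rw [abs_of_nonpos (by linarith)]; linarith

lemma primitive_full {c a s : ℝ} (ha : a ≤ c - 1) (hs : c + 1 ≤ s) :
    ∫ t in a..s, sbump (t - c) = 4/3 := by
  rw [integral_sbump_shift]; exact unsh_full (by linarith) (by linarith)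

lemma primitive_hasDerivAt (c a s : ℝ) :
    HasDerivAt (fun u => ∫ t in a..u, sbump (t - c)) (sbump (s - c)) s :=
  (Continuous.integral_hasStrictDerivAt
    (sbump_continuous.comp (continuous_id.sub continuous_const)) a s).hasDerivAt

lemma primitive_continuous (c a : ℝ) :
    Continuous (fun u => ∫ t in a..u, sbump (t - c)) := by
  have : Differentiable ℝ (fun u => ∫ t in a..u, sbump (t - c)) :=
    fun s => (primitive_hasDerivAt c a s).differentiableAt
  exact this.continuous

open scoped RealInnerProductSpace

noncomputable def cutoff1 (s : ℝ) : ℝ := 1 - (3/4) * ∫ t in (1:ℝ)..s, sbump (t - 2)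

lemma cutoff1_hasDerivAt (s : ℝ) : HasDerivAt cutoff1 (-(3/4 * sbump (s - 2))) s := by
  have h := (primitive_hasDerivAt 2 1 s).const_mul (3/4 : ℝ)
  have h2 := (hasDerivAt_const s (1:ℝ)).sub h
  rw [zero_sub] at h2
  exact h2

lemma cutoff1_continuous : Continuous cutoff1 :=
  continuous_const.sub (continuous_const.mul (primitive_continuous 2 1))

lemma cutoff1_nonneg (s : ℝ) : 0 ≤ cutoff1 s := by
  have := primitive_le (c := 2) (a := 1) (s := s) (by norm_num)
  simp only [cutoff1]; linarith

lemma cutoff1_le_one (s : ℝ) : cutoff1 s ≤ 1 := by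
  have := primitive_nonneg (c := 2) (a := 1) (s := s) (by norm_num)
  simp only [cutoff1]; linarith

lemma cutoff1_eq_one {s : ℝ} (h : s ≤ 1) : cutoff1 s = 1 := by
  rw [cutoff1, primitive_zero (by norm_num) (by linarith)]; ring

lemma cutoff1_eq_zero {s : ℝ} (h : 3 ≤ s) : cutoff1 s = 0 := by
  rw [cutoff1, primitive_full (by norm_num) (by linarith)]; ring

variable {F : Type*} [NormedAddCommGroup F] [InnerProductSpace ℝ F]

noncomputable def chiE (R : ℝ) (y : F) : ℝ := cutoff1 ((R^2)⁻¹ * ‖y‖^2)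

noncomputable def DchiE (R : ℝ) (y : F) : F →L[ℝ] ℝ :=
  (-(3/4 * sbump ((R^2)⁻¹ * ‖y‖^2 - 2))) • ((R^2)⁻¹ • ((2:ℝ) • (innerSL ℝ y)))

lemma chiE_hasFDerivAt (R : ℝ) (y : F) : HasFDerivAt (chiE R) (DchiE R y) y := by
  have h1 : HasFDerivAt (fun y : F => (R^2)⁻¹ * ‖y‖^2) ((R^2)⁻¹ • ((2:ℝ) • (innerSL ℝ y))) y := by
    have := ((hasStrictFDerivAt_norm_sq y).hasFDerivAt).const_mul ((R^2)⁻¹ : ℝ)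
    simpa [two_smul, smul_smul] using this
  exact (cutoff1_hasDerivAt _).comp_hasFDerivAt y h1

lemma DchiE_apply (R : ℝ) (y v : F) :
    DchiE R y v = (-(3/4 * sbump ((R^2)⁻¹ * ‖y‖^2 - 2))) * ((R^2)⁻¹ * (2 * ⟪y, v⟫)) := by
  simp [DchiE, smul_smul]
  ring

lemma chiE_continuous (R : ℝ) : Continuous (chiE R : F → ℝ) :=
  cutoff1_continuous.comp (continuous_const.mul (continuous_norm.pow 2))

lemma chiE_nonneg (R : ℝ) (y : F) : 0 ≤ chiE R y := cutoff1_nonneg _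
lemma chiE_le_one (R : ℝ) (y : F) : chiE R y ≤ 1 := cutoff1_le_one _

lemma chiE_eq_one {R : ℝ} (hR : 1 ≤ R) {y : F} (h : ‖y‖ ≤ R) : chiE R y = 1 := by
  apply cutoff1_eq_one
  have hR0 : (0:ℝ) < R^2 := by positivity
  rw [inv_mul_le_iff₀ hR0]
  nlinarith [norm_nonneg y]

lemma chiE_eq_zero {R : ℝ} (hR : 1 ≤ R) {y : F} (h : 2*R ≤ ‖y‖) : chiE R y = 0 := by
  apply cutoff1_eq_zero
  have hR0 : (0:ℝ) < R := by linarith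
  rw [show (3:ℝ) = (R^2)⁻¹ * (3 * R^2) by field_simp]
  gcongr
  nlinarith [norm_nonneg y]

lemma DchiE_bound {R : ℝ} (hR : 1 ≤ R) (y v : F) : ‖DchiE R y v‖ ≤ 3/R * ‖v‖ := by
  have hR0 : (0:ℝ) < R := by linarith
  rcases le_or_gt ‖y‖ (2*R) with hy | hy
  · rw [Real.norm_eq_abs, DchiE_apply, abs_mul]
    have h1 : |⟪y, v⟫| ≤ (2*R) * ‖v‖ :=
      le_trans (abs_real_inner_le_norm y v) (by nlinarith [norm_nonneg v])
    have h2 : |(-(3/4 * sbump ((R^2)⁻¹ * ‖y‖^2 - 2)))| ≤ 3/4 := by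
      rw [abs_neg, abs_mul, abs_of_nonneg (sbump_nonneg _),
        abs_of_nonneg (by norm_num : (0:ℝ) ≤ 3/4)]
      nlinarith [sbump_le_one ((R^2)⁻¹ * ‖y‖^2 - 2), sbump_nonneg ((R^2)⁻¹ * ‖y‖^2 - 2)]
    have h3 : |(R^2)⁻¹ * (2 * ⟪y, v⟫)| ≤ (R^2)⁻¹ * (2 * ((2*R) * ‖v‖)) := by
      rw [abs_mul, abs_mul]
      have : |((R:ℝ)^2)⁻¹| = (R^2)⁻¹ := abs_of_nonneg (by positivity)
      rw [this, abs_two]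
      gcongr
    have h4 : (R^2)⁻¹ * (2 * ((2*R) * ‖v‖)) = 4/R * ‖v‖ := by field_simp; ring
    calc |(-(3/4 * sbump ((R^2)⁻¹ * ‖y‖^2 - 2)))| * |(R^2)⁻¹ * (2 * ⟪y, v⟫)|
        ≤ (3/4) * (4/R * ‖v‖) := by
          rw [← h4] at *
          apply mul_le_mul h2 h3 (abs_nonneg _) (by norm_num)
      _ = 3/R * ‖v‖ := by field_simp
  · have hz : sbump ((R^2)⁻¹ * ‖y‖^2 - 2) = 0 := by
      apply sbump_eq_zero
      have : (4:ℝ)*R^2 ≤ ‖y‖^2 := by nlinarith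
      have h2 : (2:ℝ) ≤ (R^2)⁻¹ * ‖y‖^2 - 2 := by
        rw [le_sub_iff_add_le,
          show (2:ℝ)+2 = (R^2)⁻¹ * (4 * R^2) by field_simp; ring]
        gcongr
      rw [abs_of_nonneg (by linarith)]; linarith
    rw [Real.norm_eq_abs, DchiE_apply, hz]
    simp
    positivity

noncomputable def eta (t0 s : ℝ) : ℝ := ∫ t in (t0-1)..s, sbump (t - t0)

lemma eta_hasDerivAt (t0 s : ℝ) : HasDerivAt (eta t0) (sbump (s - t0)) s :=
  primitive_hasDerivAt t0 (t0-1) s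

lemma eta_continuous (t0 : ℝ) : Continuous (eta t0) := primitive_continuous t0 (t0-1)

lemma eta_nonneg (t0 s : ℝ) : 0 ≤ eta t0 s := primitive_nonneg (by linarith)

lemma eta_le (t0 s : ℝ) : eta t0 s ≤ 4/3 := primitive_le (by linarith)

lemma eta_zero {t0 s : ℝ} (h : s ≤ t0 - 1) : eta t0 s = 0 := primitive_zero le_rfl h

open MeasureTheory Filter Topology

set_option maxHeartbeats 2000000 in
theorem core_vanish {d : ℕ} (S : EuclideanSpace ℝ (Fin d) → Matrix (Fin d) (Fin d) ℝ)
    (hC1 : ∀ i j : Fin d, ContDiff ℝ 1 (fun y => S y i j))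
    (hint : ∀ i j : Fin d,
      MeasureTheory.Integrable (fun y : EuclideanSpace ℝ (Fin d) => S y i j))
    (K : Set (EuclideanSpace ℝ (Fin d)))
    (hdiv : ∀ x ∉ K, ∀ i : Fin d,
      ∑ j, (fderiv ℝ (fun y => S y i j) x) (EuclideanSpace.single j 1) = 0)
    (n x₀ : EuclideanSpace ℝ (Fin d)) (c : ℝ)
    (hsep : ∀ y ∈ K, ⟪n, y⟫ ≤ c) (hgap : c + 1 ≤ ⟪n, x₀⟫)
    (hg0 : ∀ y, 0 ≤ ∑ i, ∑ j, n i * n j * S y i j) :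
    ∑ i, ∑ j, n i * n j * S x₀ i j = 0 := by
  classical
  set L : EuclideanSpace ℝ (Fin d) →L[ℝ] ℝ := innerSL ℝ n with hLdef
  set t0 : ℝ := ⟪n, x₀⟫ with ht0
  set g : EuclideanSpace ℝ (Fin d) → ℝ := fun y => ∑ i, ∑ j, n i * n j * S y i j with hgdef
  have hScont : ∀ i j : Fin d, Continuous (fun y => S y i j) := fun i j => (hC1 i j).continuous
  have hgc : Continuous g := by
    apply continuous_finset_sum; intro i _
    apply continuous_finset_sum; intro j _
    exact continuous_const.mul (hScont i j)
  have hgint : Integrable g := by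
    apply MeasureTheory.integrable_finset_sum; intro i _
    apply MeasureTheory.integrable_finset_sum; intro j _
    exact (hint i j).const_mul _
  have hLc : Continuous fun y : EuclideanSpace ℝ (Fin d) => L y := L.continuous
  have hetaLc : Continuous fun y => eta t0 (L y) := (eta_continuous t0).comp hLc
  have hsbLc : Continuous fun y => sbump (L y - t0) :=
    sbump_continuous.comp (hLc.sub continuous_const)
  have hLsingle : ∀ j : Fin d, L (EuclideanSpace.single j 1) = n j := by
    intro j
    show ⟪n, EuclideanSpace.single j 1⟫ = n j
    rw [EuclideanSpace.inner_single_right]; simp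
  have hI3 : ∀ (R : ℝ), ∀ i j : Fin d, Integrable fun y =>
      (chiE R y * sbump (L y - t0)) * S y i j := by
    intro R i j
    apply (hint i j).bdd_mul (c := 1) (((chiE_continuous R).mul hsbLc).aestronglyMeasurable)
    refine ae_of_all _ (fun y => ?_)
    rw [Pi.mul_apply, Real.norm_eq_abs, abs_mul, abs_of_nonneg (chiE_nonneg _ _),
      abs_of_nonneg (sbump_nonneg _)]
    nlinarith [chiE_le_one R y, chiE_nonneg R y, sbump_le_one (L y - t0),
      sbump_nonneg (L y - t0)]
  have hDχc : ∀ (R : ℝ) (v : EuclideanSpace ℝ (Fin d)), Continuous fun y => DchiE R y v := by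
    intro R v
    have he : (fun y : EuclideanSpace ℝ (Fin d) => DchiE R y v) =
        fun y => (-(3/4 * sbump ((R^2)⁻¹ * ‖y‖^2 - 2))) * ((R^2)⁻¹ * (2 * ⟪y, v⟫)) :=
      funext fun y => DchiE_apply R y v
    rw [he]
    exact (continuous_const.mul (sbump_continuous.comp ((continuous_const.mul
      (continuous_norm.pow 2)).sub continuous_const))).neg.mul
      (continuous_const.mul (continuous_const.mul
        (continuous_id.inner continuous_const)))
  have hI2 : ∀ (R : ℝ), 1 ≤ R → ∀ i j : Fin d, Integrable fun y =>
      (eta t0 (L y) * DchiE R y (EuclideanSpace.single j 1)) * S y i j := by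
    intro R hR i j
    apply (hint i j).bdd_mul (c := 4/3 * (3/R * 1)) ((hetaLc.mul (hDχc R _)).aestronglyMeasurable)
    refine ae_of_all _ (fun y => ?_)
    rw [Pi.mul_apply, Real.norm_eq_abs, abs_mul]
    apply mul_le_mul
    · rw [abs_of_nonneg (eta_nonneg _ _)]; exact eta_le _ _
    · have h := DchiE_bound hR y (EuclideanSpace.single j 1)
      rwa [EuclideanSpace.norm_single, norm_one] at h
    · exact abs_nonneg _
    · norm_num
  -- the key identity, for every R ≥ 1
  have key : ∀ R : ℝ, 1 ≤ R →
      ∫ y, (chiE R y * sbump (L y - t0)) * g y =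
      - ∑ i, ∑ j, n i * ∫ y,
          (eta t0 (L y) * DchiE R y (EuclideanSpace.single j 1)) * S y i j := by
    intro R hR
    set φ : EuclideanSpace ℝ (Fin d) → ℝ := fun y => eta t0 (L y) * chiE R y with hφdef
    set Dφ : EuclideanSpace ℝ (Fin d) → (EuclideanSpace ℝ (Fin d) →L[ℝ] ℝ) := fun y =>
      (eta t0 (L y)) • DchiE R y + (chiE R y) • (sbump (L y - t0) • (L : _ →L[ℝ] ℝ))
      with hDφdef
    have hφD : ∀ y, HasFDerivAt φ (Dφ y) y := by
      intro y
      have h1 : HasFDerivAt (fun y => eta t0 (L y)) (sbump (L y - t0) • (L : _ →L[ℝ] ℝ)) y :=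
        (eta_hasDerivAt t0 (L y)).comp_hasFDerivAt y L.hasFDerivAt
      exact h1.mul (chiE_hasFDerivAt R y)
    have hφdiff : Differentiable ℝ φ := fun y => (hφD y).differentiableAt
    have hφfd : ∀ y, fderiv ℝ φ y = Dφ y := fun y => (hφD y).fderiv
    have hDφapp : ∀ (y) (j : Fin d), Dφ y (EuclideanSpace.single j 1) =
        eta t0 (L y) * DchiE R y (EuclideanSpace.single j 1)
        + chiE R y * (sbump (L y - t0) * n j) := by
      intro y j
      simp [hDφdef, hLsingle j]
    have hφc : Continuous φ := hetaLc.mul (chiE_continuous R)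
    have hφbd : ∀ y, ‖φ y‖ ≤ 4/3 := by
      intro y
      rw [Real.norm_eq_abs, abs_mul, abs_of_nonneg (eta_nonneg _ _),
        abs_of_nonneg (chiE_nonneg _ _)]
      nlinarith [eta_le t0 (L y), eta_nonneg t0 (L y), chiE_le_one R y, chiE_nonneg R y]
    have hφsupp : HasCompactSupport φ := by
      apply HasCompactSupport.mul_left
      apply HasCompactSupport.intro (isCompact_closedBall (0:EuclideanSpace ℝ (Fin d)) (2*R))
      intro y hy
      simp only [Metric.mem_closedBall, dist_zero_right, not_le] at hy
      exact chiE_eq_zero hR hy.le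
    have h2int : ∀ i j : Fin d, Integrable fun y =>
        φ y * fderiv ℝ (fun y' => S y' i j) y (EuclideanSpace.single j 1) := by
      intro i j
      apply Continuous.integrable_of_hasCompactSupport
      · exact hφc.mul (((hC1 i j).continuous_fderiv one_ne_zero).clm_apply continuous_const)
      · exact hφsupp.mul_right
    have ibp : ∀ i j : Fin d,
        ∫ y, φ y * fderiv ℝ (fun y' => S y' i j) y (EuclideanSpace.single j 1)
        = -(∫ y, (eta t0 (L y) * DchiE R y (EuclideanSpace.single j 1)) * S y i j)
          - n j * ∫ y, (chiE R y * sbump (L y - t0)) * S y i j := by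
      intro i j
      have he : (fun y => fderiv ℝ φ y (EuclideanSpace.single j 1) * S y i j) =
          fun y => (eta t0 (L y) * DchiE R y (EuclideanSpace.single j 1)) * S y i j
            + n j * ((chiE R y * sbump (L y - t0)) * S y i j) := by
        funext y
        rw [hφfd y, hDφapp y j]
        ring
      have h1 : Integrable fun y =>
          fderiv ℝ φ y (EuclideanSpace.single j 1) * S y i j := by
        rw [he]
        exact (hI2 R hR i j).add ((hI3 R i j).const_mul _)
      have h3 : Integrable fun y => φ y * S y i j :=
        (hint i j).bdd_mul (c := 4/3) hφc.aestronglyMeasurable (ae_of_all _ hφbd)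
      have hibp := integral_mul_fderiv_eq_neg_fderiv_mul_of_integrable h1 (h2int i j) h3
        (fun x _ => hφdiff x) (fun x _ => (hC1 i j).differentiable one_ne_zero x)
      rw [hibp, he, MeasureTheory.integral_add (hI2 R hR i j) ((hI3 R i j).const_mul _),
        MeasureTheory.integral_const_mul]
      ring
    have hvanish : ∑ i, ∑ j, n i *
        ∫ y, φ y * fderiv ℝ (fun y' => S y' i j) y (EuclideanSpace.single j 1) = 0 := by
      apply Finset.sum_eq_zero; intro i _
      have hswap : ∑ j, n i * (∫ y, φ y * fderiv ℝ (fun y' => S y' i j) y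
          (EuclideanSpace.single j 1)) = n i * ∫ y, ∑ j,
          φ y * fderiv ℝ (fun y' => S y' i j) y (EuclideanSpace.single j 1) := by
        rw [← Finset.mul_sum, MeasureTheory.integral_finset_sum _ (fun j _ => h2int i j)]
      rw [hswap]
      have hz : (fun y => ∑ j, φ y * fderiv ℝ (fun y' => S y' i j) y
          (EuclideanSpace.single j 1)) = fun _ => (0:ℝ) := by
        funext y
        rw [← Finset.mul_sum]
        by_cases hy : y ∈ K
        · have hη : eta t0 (L y) = 0 := by
            apply eta_zero
            have := hsep y hy
            show (⟪n, y⟫:ℝ) ≤ t0 - 1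
            rw [← ht0] at *
            linarith
          simp [hφdef, hη]
        · rw [hdiv y hy i, mul_zero]
      rw [hz]
      simp
    have expand : ∑ i, ∑ j, n i *
        ∫ y, φ y * fderiv ℝ (fun y' => S y' i j) y (EuclideanSpace.single j 1)
        = - (∑ i, ∑ j, n i * ∫ y,
            (eta t0 (L y) * DchiE R y (EuclideanSpace.single j 1)) * S y i j)
          - ∑ i, ∑ j, (n i * n j) * ∫ y, (chiE R y * sbump (L y - t0)) * S y i j := by
      rw [← Finset.sum_neg_distrib, ← Finset.sum_sub_distrib]
      apply Finset.sum_congr rfl; intro i _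
      rw [← Finset.sum_neg_distrib, ← Finset.sum_sub_distrib]
      apply Finset.sum_congr rfl; intro j _
      rw [ibp i j]
      ring
    have collect : ∑ i, ∑ j, (n i * n j) * ∫ y, (chiE R y * sbump (L y - t0)) * S y i j
        = ∫ y, (chiE R y * sbump (L y - t0)) * g y := by
      have step1 : ∀ i : Fin d, ∑ j, (n i * n j) * ∫ y,
          (chiE R y * sbump (L y - t0)) * S y i j
          = ∫ y, ∑ j, (n i * n j) * ((chiE R y * sbump (L y - t0)) * S y i j) := by
        intro i
        rw [MeasureTheory.integral_finset_sum _ (fun j _ => (hI3 R i j).const_mul _)]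
        apply Finset.sum_congr rfl; intro j _
        rw [MeasureTheory.integral_const_mul]
      rw [Finset.sum_congr rfl (fun i _ => step1 i),
        ← MeasureTheory.integral_finset_sum _ (fun i _ =>
          MeasureTheory.integrable_finset_sum _ (fun j _ => (hI3 R i j).const_mul _))]
      congr 1
      funext y
      rw [hgdef]
      simp only [Finset.mul_sum]
      apply Finset.sum_congr rfl; intro i _
      apply Finset.sum_congr rfl; intro j _
      ring
    have h0 := hvanish
    rw [expand, collect] at h0
    linarith
  -- the error bound
  have hterm : ∀ (R : ℝ), 1 ≤ R → ∀ i j : Fin d,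
      ‖∫ y, (eta t0 (L y) * DchiE R y (EuclideanSpace.single j 1)) * S y i j‖
      ≤ 4/R * ∫ y, ‖S y i j‖ := by
    intro R hR i j
    have hRne : R ≠ 0 := by linarith
    rw [show (4/R * ∫ y, ‖S y i j‖) = ∫ y, 4/R * ‖S y i j‖ by rw [MeasureTheory.integral_const_mul]]
    apply MeasureTheory.norm_integral_le_of_norm_le ((hint i j).norm.const_mul _)
    apply Filter.Eventually.of_forall
    intro y
    rw [Real.norm_eq_abs, abs_mul]
    have h1 : |eta t0 (L y) * DchiE R y (EuclideanSpace.single j 1)| ≤ 4/R := by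
      rw [abs_mul]
      have h2 : |DchiE R y (EuclideanSpace.single j 1)| ≤ 3/R := by
        have h := DchiE_bound hR y (EuclideanSpace.single j 1)
        rwa [EuclideanSpace.norm_single, norm_one, mul_one, Real.norm_eq_abs] at h
      have h3 : |eta t0 (L y)| ≤ 4/3 := by
        rw [abs_of_nonneg (eta_nonneg _ _)]; exact eta_le _ _
      calc |eta t0 (L y)| * |DchiE R y (EuclideanSpace.single j 1)|
          ≤ (4/3) * (3/R) := by
            apply mul_le_mul h3 h2 (abs_nonneg _) (by norm_num)
        _ = 4/R := by field_simp
    calc |eta t0 (L y) * DchiE R y (EuclideanSpace.single j 1)| * |S y i j|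
        ≤ 4/R * |S y i j| := mul_le_mul_of_nonneg_right h1 (abs_nonneg _)
      _ = 4/R * ‖S y i j‖ := rfl
  set Ctot : ℝ := ∑ i, ∑ j, |n i| * (4 * ∫ y, ‖S y i j‖) with hCtot
  have hErr : ∀ (R : ℝ), 1 ≤ R →
      ‖∑ i, ∑ j, n i * ∫ y,
          (eta t0 (L y) * DchiE R y (EuclideanSpace.single j 1)) * S y i j‖ ≤ Ctot / R := by
    intro R hR
    have hRpos : (0:ℝ) < R := by linarith
    rw [Real.norm_eq_abs, hCtot, Finset.sum_div]
    apply le_trans (Finset.abs_sum_le_sum_abs _ _)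
    apply Finset.sum_le_sum
    intro i _
    rw [Finset.sum_div]
    apply le_trans (Finset.abs_sum_le_sum_abs _ _)
    apply Finset.sum_le_sum
    intro j _
    rw [abs_mul]
    have := hterm R hR i j
    rw [Real.norm_eq_abs] at this
    calc |n i| * |∫ y, (eta t0 (L y) * DchiE R y (EuclideanSpace.single j 1)) * S y i j|
        ≤ |n i| * (4/R * ∫ y, ‖S y i j‖) :=
          mul_le_mul_of_nonneg_left this (abs_nonneg _)
      _ = |n i| * (4 * ∫ y, ‖S y i j‖) / R := by ring
  -- pass to the limit R = m+1 → ∞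
  have h1m : ∀ m : ℕ, (1:ℝ) ≤ (m:ℝ) + 1 := by
    intro m
    have : (0:ℝ) ≤ (m:ℝ) := Nat.cast_nonneg m
    linarith
  have hTend1 : Tendsto (fun m : ℕ => ∫ y, (chiE ((m:ℝ)+1) y * sbump (L y - t0)) * g y)
      atTop (𝓝 (∫ y, sbump (L y - t0) * g y)) := by
    apply MeasureTheory.tendsto_integral_of_dominated_convergence (fun y => sbump (L y - t0) * ‖g y‖)
    · intro m
      exact (((chiE_continuous _).mul hsbLc).mul hgc).aestronglyMeasurable
    · apply hgint.norm.bdd_mul (c := 1) hsbLc.aestronglyMeasurable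
      refine ae_of_all _ (fun y => ?_)
      rw [Real.norm_eq_abs, abs_of_nonneg (sbump_nonneg _)]
      exact sbump_le_one _
    · intro m
      apply Filter.Eventually.of_forall
      intro y
      rw [Real.norm_eq_abs, abs_mul, abs_mul, abs_of_nonneg (chiE_nonneg _ _),
        abs_of_nonneg (sbump_nonneg _)]
      have h1 : chiE ((m:ℝ)+1) y * sbump (L y - t0) ≤ sbump (L y - t0) := by
        nlinarith [chiE_le_one ((m:ℝ)+1) y, chiE_nonneg ((m:ℝ)+1) y, sbump_nonneg (L y - t0)]
      exact mul_le_mul_of_nonneg_right h1 (abs_nonneg _)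
    · apply Filter.Eventually.of_forall
      intro y
      apply Filter.Tendsto.congr' _ tendsto_const_nhds
      filter_upwards [Filter.eventually_ge_atTop (Nat.ceil ‖y‖)] with m hm
      have hy : ‖y‖ ≤ (m:ℝ) + 1 := by
        calc ‖y‖ ≤ (Nat.ceil ‖y‖ : ℝ) := Nat.le_ceil _
          _ ≤ (m:ℝ) := by exact_mod_cast hm
          _ ≤ (m:ℝ) + 1 := by linarith
      rw [chiE_eq_one (h1m m) hy, one_mul]
  have hTend2 : Tendsto (fun m : ℕ => ∫ y, (chiE ((m:ℝ)+1) y * sbump (L y - t0)) * g y)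
      atTop (𝓝 0) := by
    apply squeeze_zero_norm (a := fun m : ℕ => Ctot / ((m:ℝ)+1))
    · intro m
      rw [key ((m:ℝ)+1) (h1m m), norm_neg]
      exact hErr ((m:ℝ)+1) (h1m m)
    · have h := (tendsto_const_div_atTop_nhds_zero_nat Ctot).comp (tendsto_add_atTop_nat 1)
      have he : (fun m : ℕ => Ctot / ((m + 1 : ℕ) : ℝ)) = fun m : ℕ => Ctot / ((m:ℝ)+1) := by
        funext m; push_cast; ring_nf
      rwa [Function.comp_def, he] at h
  have hzero : ∫ y, sbump (L y - t0) * g y = 0 := tendsto_nhds_unique hTend1 hTend2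
  have hGnn : ∀ y, 0 ≤ sbump (L y - t0) * g y := fun y => mul_nonneg (sbump_nonneg _) (hg0 y)
  have hGint : Integrable fun y => sbump (L y - t0) * g y := by
    apply hgint.bdd_mul (c := 1) hsbLc.aestronglyMeasurable
    refine ae_of_all _ (fun y => ?_)
    rw [Real.norm_eq_abs, abs_of_nonneg (sbump_nonneg _)]
    exact sbump_le_one _
  have hae := (MeasureTheory.integral_eq_zero_iff_of_nonneg hGnn hGint).1 hzero
  have heq0 : (fun y => sbump (L y - t0) * g y) = fun _ => (0:ℝ) :=
    (Continuous.ae_eq_iff_eq volume (hsbLc.mul hgc) continuous_const).1 hae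
  have hx := congrFun heq0 x₀
  have hLx : L x₀ - t0 = 0 := by
    show (⟪n, x₀⟫:ℝ) - t0 = 0
    rw [← ht0]; ring
  rw [hLx, sbump_zero, one_mul] at hx
  exact hx


/-- Smooth version of the support theorem: a `C¹`, integrable, pointwise
positive semidefinite stress field whose divergence vanishes outside a compact
convex set `K` vanishes identically outside `K`. -/
theorem stress_supported_in_convex_hull (d : ℕ) (hd : 1 ≤ d)
    (S : EuclideanSpace ℝ (Fin d) → Matrix (Fin d) (Fin d) ℝ)
    (hC1 : ∀ i j : Fin d, ContDiff ℝ 1 (fun y => S y i j))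
    (hsym : ∀ x, (S x).IsSymm)
    (hpsd : ∀ x, (S x).PosSemidef)
    (hint : ∀ i j : Fin d,
      MeasureTheory.Integrable (fun y : EuclideanSpace ℝ (Fin d) => S y i j))
    (K : Set (EuclideanSpace ℝ (Fin d))) (hK : IsCompact K) (hKc : Convex ℝ K)
    (hdiv : ∀ x ∉ K, ∀ i : Fin d,
      ∑ j, (fderiv ℝ (fun y => S y i j) x) (EuclideanSpace.single j 1) = 0) :
    ∀ x ∉ K, S x = 0 := by
  intro x hx
  have quad : ∀ (v : EuclideanSpace ℝ (Fin d)) (y : EuclideanSpace ℝ (Fin d)),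
      ∑ i, ∑ j, v i * v j * S y i j = dotProduct (star (v : Fin d → ℝ))
        ((S y).mulVec (v : Fin d → ℝ)) := by
    intro v y
    simp only [dotProduct, Matrix.mulVec, star_trivial, Finset.mul_sum]
    apply Finset.sum_congr rfl; intro i _
    apply Finset.sum_congr rfl; intro j _
    ring
  have hg0 : ∀ (v : EuclideanSpace ℝ (Fin d)) (y : EuclideanSpace ℝ (Fin d)),
      0 ≤ ∑ i, ∑ j, v i * v j * S y i j := by
    intro v y
    rw [quad]
    exact (hpsd y).dotProduct_mulVec_nonneg v
  -- main step: any strictly separating direction is in the kernel of `S x`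
  have key : ∀ (n : EuclideanSpace ℝ (Fin d)) (u : ℝ), (∀ y ∈ K, ⟪n, y⟫ ≤ u) →
      u < ⟪n, x⟫ → (S x).mulVec (n : Fin d → ℝ) = 0 := by
    intro n u hsepu hu
    have htu : (0:ℝ) < ⟪n, x⟫ - u := by linarith
    set lam : ℝ := 2 / (⟪n, x⟫ - u) with hlam
    have hlam0 : 0 < lam := by positivity
    have hsep' : ∀ y ∈ K, ⟪lam • n, y⟫ ≤ lam * u := by
      intro y hy
      rw [real_inner_smul_left]
      exact mul_le_mul_of_nonneg_left (hsepu y hy) hlam0.le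
    have hgap' : lam * u + 1 ≤ ⟪lam • n, x⟫ := by
      rw [real_inner_smul_left]
      have h2 : lam * (⟪n, x⟫ - u) = 2 := by
        rw [hlam]; exact div_mul_cancel₀ 2 (ne_of_gt htu)
      nlinarith
    have hz := core_vanish S hC1 hint K hdiv (lam • n) x (lam * u) hsep' hgap'
      (fun y => hg0 (lam • n) y)
    have hdot : dotProduct (star ((lam • n : EuclideanSpace ℝ (Fin d)) : Fin d → ℝ))
        ((S x).mulVec ((lam • n : EuclideanSpace ℝ (Fin d)) : Fin d → ℝ)) = 0 := by
      rw [← quad]; exact hz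
    have hmv := ((hpsd x).dotProduct_mulVec_zero_iff _).1 hdot
    have hsm : ((lam • n : EuclideanSpace ℝ (Fin d)) : Fin d → ℝ)
        = lam • (n : Fin d → ℝ) := rfl
    rw [hsm, Matrix.mulVec_smul] at hmv
    rcases smul_eq_zero.1 hmv with h | h
    · exact absurd h (ne_of_gt hlam0)
    · exact h
  -- every basis vector is in the kernel of `S x`
  have hcol : ∀ i : Fin d,
      (S x).mulVec ((EuclideanSpace.single i 1 : EuclideanSpace ℝ (Fin d)) : Fin d → ℝ) = 0 := by
    intro i
    rcases K.eq_empty_or_nonempty with hKe | hKne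
    · apply key (EuclideanSpace.single i 1) (⟪(EuclideanSpace.single i 1 : EuclideanSpace ℝ (Fin d)), x⟫ - 1)
      · intro y hy; rw [hKe] at hy; exact absurd hy (Set.notMem_empty y)
      · linarith
    · obtain ⟨f, u, hfK, hfx⟩ := geometric_hahn_banach_closed_point hKc hK.isClosed hx
      set n0 : EuclideanSpace ℝ (Fin d) := (InnerProductSpace.toDual ℝ _).symm f with hn0def
      have hn0 : ∀ y, ⟪n0, y⟫ = f y := fun y => InnerProductSpace.toDual_symm_apply
      set e : EuclideanSpace ℝ (Fin d) := EuclideanSpace.single i 1 with hedef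
      have he1 : ‖e‖ = 1 := by rw [hedef, EuclideanSpace.norm_single, norm_one]
      obtain ⟨C, hC⟩ := hK.exists_bound_of_continuousOn
        ((innerSL ℝ e).continuous.continuousOn)
      have hC0 : 0 ≤ C := by
        obtain ⟨y0, hy0⟩ := hKne
        exact le_trans (norm_nonneg _) (hC y0 hy0)
      have hgap : (0:ℝ) < f x - u := by linarith
      set D : ℝ := C + ‖x‖ + 1 with hD
      have hD0 : 0 < D := by positivity
      set ε : ℝ := (f x - u) / (2 * D) with hε
      have hε0 : 0 < ε := by positivity
      have h1 : (S x).mulVec ((n0 + ε • e : EuclideanSpace ℝ (Fin d)) : Fin d → ℝ) = 0 := by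
        apply key _ (u + ε * C)
        · intro y hy
          rw [inner_add_left, real_inner_smul_left, hn0]
          have hb : ⟪e, y⟫ ≤ C := by
            have := hC y hy
            rw [Real.norm_eq_abs] at this
            exact le_trans (le_abs_self _) this
          have := (hfK y hy).le
          nlinarith
        · rw [inner_add_left, real_inner_smul_left, hn0]
          have hb : -‖x‖ ≤ ⟪e, x⟫ := by
            have := abs_real_inner_le_norm e x
            rw [he1, one_mul] at this
            linarith [neg_abs_le (⟪e, x⟫ : ℝ)]
          have hεD : ε * D = (f x - u) / 2 := by
            rw [hε]; field_simp
          nlinarith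
      have h2 : (S x).mulVec (n0 : Fin d → ℝ) = 0 := by
        apply key n0 u
        · intro y hy; rw [hn0]; exact (hfK y hy).le
        · rw [hn0]; exact hfx
      have hadd : ((n0 + ε • e : EuclideanSpace ℝ (Fin d)) : Fin d → ℝ)
          = (n0 : Fin d → ℝ) + ε • (e : Fin d → ℝ) := rfl
      rw [hadd, Matrix.mulVec_add, h2, zero_add, Matrix.mulVec_smul] at h1
      rcases smul_eq_zero.1 h1 with h | h
      · exact absurd h (ne_of_gt hε0)
      · exact h
  -- conclude
  ext j i
  have := congrFun (hcol i) j
  simpa [Matrix.mulVec, dotProduct, EuclideanSpace.single_apply] using this
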